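/- Let G = (V,E) be a cactus graph. For any S ⊆ V with |δ(S)| ≥ 3, the graph H_S = (V, E \ δ(S)) has at least three connected components. -/

import Mathlib

/-- The cut-set of `S`: edges of `G` with exactly one endpoint in `S`. -/
def cutSet {V : Type*} (G : SimpleGraph V) (S : Set V) : Set (Sym2 V) :=
  {e | e ∈ G.edgeSet ∧ ∃ u v, e = s(u, v) ∧ u ∈ S ∧ v ∉ S}

/-- A cactus: a connected graph in which every edge belongs to at most one simple cycle
(any two simple cycles through a common edge have the same edge set). -/
def IsCactus {V : Type*} (G : SimpleGraph V) : Prop :=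
  G.Connected ∧ ∀ e ∈ G.edgeSet, ∀ (u v : V) (c : G.Walk u u) (d : G.Walk v v),
    c.IsCycle → d.IsCycle → e ∈ c.edges → e ∈ d.edges →
    {e' | e' ∈ c.edges} = {e' | e' ∈ d.edges}

section Aux

variable {V : Type*} {G : SimpleGraph V} {S : Set V}

private lemma adj_side {u v : V} (h : (G.deleteEdges (cutSet G S)).Adj u v) :
    (u ∈ S ↔ v ∈ S) := by
  rw [SimpleGraph.deleteEdges_adj] at h
  constructor
  · intro hu; by_contra hv
    exact h.2 ⟨G.mem_edgeSet.mpr h.1, u, v, rfl, hu, hv⟩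
  · intro hv; by_contra hu
    exact h.2 ⟨G.mem_edgeSet.mpr h.1, v, u, Sym2.eq_swap, hv, hu⟩

private lemma walk_side {u v : V} (w : (G.deleteEdges (cutSet G S)).Walk u v) :
    ∀ x ∈ w.support, (x ∈ S ↔ u ∈ S) := by
  induction w with
  | nil => intro x hx; rw [SimpleGraph.Walk.support_nil, List.mem_singleton] at hx; rw [hx]
  | @cons u u' v h p ih =>
    intro x hx
    rw [SimpleGraph.Walk.support_cons, List.mem_cons] at hx
    rcases hx with rfl | hx
    · rfl
    · exact (ih x hx).trans (adj_side h).symm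

private lemma reach_side {u v : V} (h : (G.deleteEdges (cutSet G S)).Reachable u v) :
    (u ∈ S ↔ v ∈ S) := by
  obtain ⟨w⟩ := h
  exact ((walk_side w) v w.end_mem_support).symm

private lemma three_le_card {α : Type*} [Finite α] {x y z : α}
    (hxy : x ≠ y) (hxz : x ≠ z) (hyz : y ≠ z) : 3 ≤ Nat.card α := by
  have h := Set.ncard_le_ncard (Set.subset_univ {x, y, z}) Set.finite_univ
  rwa [Set.ncard_univ, Set.ncard_eq_three.mpr ⟨x, y, z, hxy, hxz, hyz, rfl⟩] at h

private lemma build_cycle {a b a' b' : V} (ha : a ∈ S) (hb : b ∉ S) (ha' : a' ∈ S)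
    (hb' : b' ∉ S) (h1 : G.Adj a b) (h2 : G.Adj a' b') (hne : s(a, b) ≠ s(a', b'))
    (hp : (G.deleteEdges (cutSet G S)).Reachable b b')
    (hq : (G.deleteEdges (cutSet G S)).Reachable a' a) :
    ∃ c : G.Walk a a, c.IsCycle ∧ s(a, b) ∈ c.edges ∧ s(a', b') ∈ c.edges ∧
      ∀ e ∈ c.edges, e = s(a, b) ∨ e = s(a', b') ∨
        e ∈ (G.deleteEdges (cutSet G S)).edgeSet := by
  classical
  set H := G.deleteEdges (cutSet G S) with hH
  obtain ⟨p0⟩ := hp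
  obtain ⟨q0⟩ := hq
  set p : H.Walk b b' := p0.toPath.1 with hpdef
  set q : H.Walk a' a := q0.toPath.1 with hqdef
  have hpp : p.IsPath := p0.toPath.2
  have hqp : q.IsPath := q0.toPath.2
  have hHG : H.edgeSet ⊆ G.edgeSet := by
    rw [hH, SimpleGraph.edgeSet_deleteEdges]; exact Set.diff_subset
  have hpe : ∀ e ∈ p.edges, e ∈ G.edgeSet := fun e he =>
    hHG (p.edges_subset_edgeSet he)
  have hqe : ∀ e ∈ q.edges, e ∈ G.edgeSet := fun e he =>
    hHG (q.edges_subset_edgeSet he)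
  set p' : G.Walk b b' := p.transfer G hpe with hp'def
  set q' : G.Walk a' a := q.transfer G hqe with hq'def
  have hpS : ∀ x ∈ p.support, x ∉ S := fun x hx => by
    rw [walk_side p x hx]; exact hb
  have hqS : ∀ x ∈ q.support, x ∈ S := fun x hx => by
    rw [walk_side q x hx]; exact ha'
  set r : G.Walk b a := p'.append (SimpleGraph.Walk.cons h2.symm q') with hrdef
  have hrsupp : r.support = p.support ++ q.support := by
    rw [hrdef, SimpleGraph.Walk.support_append, SimpleGraph.Walk.support_cons,
      List.tail_cons, SimpleGraph.Walk.support_transfer, SimpleGraph.Walk.support_transfer]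
  have hredges : r.edges = p.edges ++ (s(b', a') :: q.edges) := by
    rw [hrdef, SimpleGraph.Walk.edges_append, SimpleGraph.Walk.edges_cons,
      SimpleGraph.Walk.edges_transfer, SimpleGraph.Walk.edges_transfer]
  have hrpath : r.IsPath := by
    rw [SimpleGraph.Walk.isPath_def, hrsupp]
    refine List.Nodup.append ?_ ?_ ?_
    · rw [← SimpleGraph.Walk.isPath_def]; exact hpp
    · rw [← SimpleGraph.Walk.isPath_def]; exact hqp
    · intro x hxp hxq
      exact hpS x hxp (hqS x hxq)
  have habr : s(a, b) ∉ r.edges := by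
    rw [hredges]
    intro hmem
    rcases List.mem_append.mp hmem with hmem | hmem
    · exact hpS a (p.fst_mem_support_of_mem_edges hmem) ha
    · rcases List.mem_cons.mp hmem with heq | hmem
      · exact hne (heq.trans Sym2.eq_swap)
      · exact hb (hqS b (q.snd_mem_support_of_mem_edges hmem))
  refine ⟨SimpleGraph.Walk.cons h1 r, ?_, ?_, ?_, ?_⟩
  · exact (SimpleGraph.Walk.cons_isCycle_iff r h1).mpr ⟨hrpath, habr⟩
  · rw [SimpleGraph.Walk.edges_cons]; exact List.mem_cons_self
  · rw [SimpleGraph.Walk.edges_cons, hredges]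
    refine List.mem_cons_of_mem _ (List.mem_append.mpr (Or.inr ?_))
    rw [Sym2.eq_swap]
    exact List.mem_cons_self
  · intro e he
    rw [SimpleGraph.Walk.edges_cons, hredges] at he
    rcases List.mem_cons.mp he with rfl | he
    · exact Or.inl rfl
    rcases List.mem_append.mp he with he | he
    · exact Or.inr (Or.inr (p.edges_subset_edgeSet he))
    rcases List.mem_cons.mp he with rfl | he
    · exact Or.inr (Or.inl Sym2.eq_swap)
    · exact Or.inr (Or.inr (q.edges_subset_edgeSet he))

end Aux

theorem cactus_three_components {V : Type*} [Fintype V] (G : SimpleGraph V)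
    (hG : IsCactus G) (S : Set V) (hS : 3 ≤ (cutSet G S).ncard) :
    3 ≤ Nat.card (G.deleteEdges (cutSet G S)).ConnectedComponent := by
  classical
  by_contra hcon
  push_neg at hcon
  set H := G.deleteEdges (cutSet G S) with hH
  obtain ⟨T, hTsub, hT3⟩ := Set.exists_subset_card_eq hS
  obtain ⟨e1, e2, e3, h12, h13, h23, rfl⟩ := Set.ncard_eq_three.mp hT3
  have hm1 : e1 ∈ cutSet G S := hTsub (by simp)
  have hm2 : e2 ∈ cutSet G S := hTsub (by simp)
  have hm3 : e3 ∈ cutSet G S := hTsub (by simp)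
  obtain ⟨hE1, a1, b1, he1, ha1, hb1⟩ := hm1
  obtain ⟨hE2, a2, b2, he2, ha2, hb2⟩ := hm2
  obtain ⟨hE3, a3, b3, he3, ha3, hb3⟩ := hm3
  have adj1 : G.Adj a1 b1 := G.mem_edgeSet.mp (he1 ▸ hE1)
  have adj2 : G.Adj a2 b2 := G.mem_edgeSet.mp (he2 ▸ hE2)
  have adj3 : G.Adj a3 b3 := G.mem_edgeSet.mp (he3 ▸ hE3)
  -- components of a's differ from components of b's
  have hab : ∀ (x y : V), x ∈ S → y ∉ S →
      H.connectedComponentMk x ≠ H.connectedComponentMk y := by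
    intro x y hx hy hxy
    exact hy ((reach_side (SimpleGraph.ConnectedComponent.eq.mp hxy)).mp hx)
  have key : ∀ (x y z : V), x ∈ S → y ∈ S → z ∉ S →
      H.connectedComponentMk x = H.connectedComponentMk y := by
    intro x y z hx hy hz
    by_contra hne
    exact absurd (three_le_card hne (hab x z hx hz) (hab y z hy hz)) (by omega)
  have key' : ∀ (x y z : V), x ∉ S → y ∉ S → z ∈ S →
      H.connectedComponentMk x = H.connectedComponentMk y := by
    intro x y z hx hy hz
    by_contra hne
    exact absurd (three_le_card hne (Ne.symm (hab z x hz hx)) (Ne.symm (hab z y hz hy)))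
      (by omega)
  have ra12 : H.Reachable a2 a1 :=
    SimpleGraph.ConnectedComponent.eq.mp (key a2 a1 b1 ha2 ha1 hb1)
  have ra13 : H.Reachable a3 a1 :=
    SimpleGraph.ConnectedComponent.eq.mp (key a3 a1 b1 ha3 ha1 hb1)
  have rb12 : H.Reachable b1 b2 :=
    SimpleGraph.ConnectedComponent.eq.mp (key' b1 b2 a1 hb1 hb2 ha1)
  have rb13 : H.Reachable b1 b3 :=
    SimpleGraph.ConnectedComponent.eq.mp (key' b1 b3 a1 hb1 hb3 ha1)
  have hne12 : s(a1, b1) ≠ s(a2, b2) := he1 ▸ he2 ▸ h12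
  have hne13 : s(a1, b1) ≠ s(a3, b3) := he1 ▸ he3 ▸ h13
  obtain ⟨c1, hc1cyc, hc1e1, hc1e2, -⟩ :=
    build_cycle ha1 hb1 ha2 hb2 adj1 adj2 hne12 rb12 ra12
  obtain ⟨c2, hc2cyc, hc2e1, -, hc2all⟩ :=
    build_cycle ha1 hb1 ha3 hb3 adj1 adj3 hne13 rb13 ra13
  have hseteq := hG.2 s(a1, b1) (he1 ▸ hE1) a1 a1 c1 c2 hc1cyc hc2cyc hc1e1 hc2e1
  have he2c2 : s(a2, b2) ∈ c2.edges := by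
    have : s(a2, b2) ∈ {e' | e' ∈ c1.edges} := hc1e2
    rwa [hseteq] at this
  rcases hc2all _ he2c2 with heq | heq | hmem
  · exact hne12 heq.symm
  · exact (he2 ▸ he3 ▸ h23) (heq ▸ rfl)
  · rw [SimpleGraph.edgeSet_deleteEdges] at hmem
    exact hmem.2 (he2 ▸ hTsub (by simp))
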